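/- arXiv:2412.16794 — 4 statements merged into one kernel-verified Lean document; each statement's English description precedes it below -/
import Mathlib

section
/- For real numbers b with 0 ≤ b < 1 and integer k ≥ 2, the sum ∑_{j=1}^{k} (1/2 / (1/2 + k - j))^{1/2} · j^{-b} is at most B(1/2, 1-b) · (k+1)^{1/2 - b}, where B denotes the Beta function. -/
open Finset

/-- The (real) Beta function `B(x,y) = ∫₀¹ t^(x-1) (1-t)^(y-1) dt`. -/
noncomputable def realBeta (x y : ℝ) : ℝ :=
  ∫ t in (0:ℝ)..1, t ^ (x - 1) * (1 - t) ^ (y - 1)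

open intervalIntegral MeasureTheory


-- integrability of the key integrand
lemma my_int (b K : ℝ) (hb1 : b < 1) (hK : 2 ≤ K) :
    IntervalIntegrable (fun s => s ^ (-(1/2) : ℝ) * (K - s) ^ (-b)) volume 0 K := by
  have hKpos : (0:ℝ) < K := by linarith
  have h1 : IntervalIntegrable (fun s => s ^ (-(1/2) : ℝ) * (K - s) ^ (-b)) volume 0 1 := by
    apply (intervalIntegrable_rpow' (by norm_num : (-1:ℝ) < -(1/2))).mul_continuousOn
    apply ContinuousOn.rpow_const (continuousOn_const.sub continuousOn_id)
    intro x hx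
    rw [Set.uIcc_of_le (by norm_num : (0:ℝ) ≤ 1)] at hx
    left; have := hx.2; intro h; change K - x = 0 at h; linarith [sub_eq_zero.mp h]
  have h2 : IntervalIntegrable (fun s => s ^ (-(1/2) : ℝ) * (K - s) ^ (-b)) volume 1 K := by
    have hi : IntervalIntegrable (fun x : ℝ => x ^ (-b)) volume 0 (K - 1) :=
      intervalIntegrable_rpow' (by linarith)
    have hi2 := (hi.comp_sub_left K).symm
    simp only [sub_zero, sub_sub_cancel] at hi2
    have := hi2.continuousOn_mul (g := fun s : ℝ => s ^ (-(1/2) : ℝ)) ?_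
    · exact this
    · apply ContinuousOn.rpow_const continuousOn_id
      intro x hx
      rw [Set.uIcc_of_le (by linarith : (1:ℝ) ≤ K)] at hx
      left; intro h; simp only [id_eq] at h; have := hx.1; rw [h] at this; norm_num at this
  exact h1.trans h2

-- lower bound for the integral over a subinterval
lemma my_step (b K c a₁ b₁ : ℝ) (hb0 : 0 ≤ b) (hb1 : b < 1) (hK : 2 ≤ K)
    (h0 : 0 ≤ a₁) (hab : a₁ ≤ b₁) (hbK : b₁ ≤ K) (hc : 0 ≤ c)
    (hcb : ∀ s ∈ Set.Ico a₁ b₁, c ≤ (K - s) ^ (-b)) :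
    2 * (b₁ ^ ((1:ℝ)/2) - a₁ ^ ((1:ℝ)/2)) * c
      ≤ ∫ s in a₁..b₁, s ^ (-(1/2) : ℝ) * (K - s) ^ (-b) := by
  have hint : IntervalIntegrable (fun s => s ^ (-(1/2) : ℝ) * (K - s) ^ (-b)) volume a₁ b₁ := by
    apply (my_int b K hb1 hK).mono_set
    apply Set.uIcc_subset_uIcc <;> rw [Set.uIcc_of_le (by linarith : (0:ℝ) ≤ K)]
    · exact ⟨h0, by linarith⟩
    · exact ⟨by linarith, hbK⟩
  have hint2 : IntervalIntegrable (fun s : ℝ => s ^ (-(1/2) : ℝ) * c) volume a₁ b₁ :=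
    (intervalIntegrable_rpow' (by norm_num)).mul_const c
  have hmono : (∫ s in a₁..b₁, s ^ (-(1/2) : ℝ) * c)
      ≤ ∫ s in a₁..b₁, s ^ (-(1/2) : ℝ) * (K - s) ^ (-b) := by
    apply integral_mono_ae_restrict hab hint2 hint
    have hne : ∀ᵐ (x:ℝ) ∂(volume.restrict (Set.Icc a₁ b₁)), x ≠ b₁ := by
      apply Filter.Eventually.filter_mono (MeasureTheory.ae_mono MeasureTheory.Measure.restrict_le_self)
      refine MeasureTheory.ae_iff.mpr ?_
      simpa using (by simp : volume ({b₁} : Set ℝ) = 0)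
    filter_upwards [MeasureTheory.ae_restrict_mem measurableSet_Icc, hne] with s hs hsne
    have hsub : s ∈ Set.Ico a₁ b₁ := ⟨hs.1, lt_of_le_of_ne hs.2 hsne⟩
    exact mul_le_mul_of_nonneg_left (hcb s hsub) (Real.rpow_nonneg (h0.trans hs.1) _)
  calc 2 * (b₁ ^ ((1:ℝ)/2) - a₁ ^ ((1:ℝ)/2)) * c
      = (∫ s in a₁..b₁, s ^ (-(1/2) : ℝ)) * c := by
        rw [integral_rpow (Or.inl (by norm_num))]
        have he : (-(1/2:ℝ)) + 1 = 1/2 := by norm_num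
        rw [he]; ring
    _ = ∫ s in a₁..b₁, s ^ (-(1/2) : ℝ) * c := (intervalIntegral.integral_mul_const _ _).symm
    _ ≤ _ := hmono

lemma my_sqrt_ineq (m : ℝ) (hm : 1 ≤ m) :
    ((1/2) / (1/2 + m)) ^ ((1:ℝ)/2) ≤ 2 * ((m+2) ^ ((1:ℝ)/2) - (m+1) ^ ((1:ℝ)/2)) := by
  rw [show ((1:ℝ)/2) = (1/(2:ℝ)) by norm_num, ← Real.sqrt_eq_rpow, ← Real.sqrt_eq_rpow,
    ← Real.sqrt_eq_rpow]
  set A := Real.sqrt (m+2) with hA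
  set B := Real.sqrt (m+1) with hB
  have hA0 : 0 ≤ A := Real.sqrt_nonneg _
  have hB0 : 0 ≤ B := Real.sqrt_nonneg _
  have hA2 : A^2 = m+2 := Real.sq_sqrt (by linarith)
  have hB2 : B^2 = m+1 := Real.sq_sqrt (by linarith)
  have hBA : B ≤ A := Real.sqrt_le_sqrt (by linarith)
  have hP2 : (A*B)^2 = (m+2)*(m+1) := by rw [mul_pow, hA2, hB2]
  have hP0 : 0 ≤ A*B := mul_nonneg hA0 hB0
  have key : (1/2)/(1/2+m) ≤ (2*(A-B))^2 := by
    rw [div_le_iff₀ (by linarith : (0:ℝ) < 1/2+m)]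
    nlinarith [hP2, hP0, sq_nonneg (A*B*(8*m+4) - (8*m^2+16*m+5.5)), sq_nonneg (m-1)]
  calc Real.sqrt ((1/2)/(1/2+m)) ≤ Real.sqrt ((2*(A-B))^2) := Real.sqrt_le_sqrt key
    _ = 2*(A-B) := Real.sqrt_sq (by linarith)

lemma my_beta_scale (b K : ℝ) (hb0 : 0 ≤ b) (hb1 : b < 1) (hK : 2 ≤ K) :
    realBeta (1/2) (1-b) * K ^ ((1:ℝ)/2 - b)
      = ∫ s in (0:ℝ)..K, s ^ (-(1/2) : ℝ) * (K - s) ^ (-b) := by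
  have hK0 : (0:ℝ) < K := by linarith
  have hcongr : Set.EqOn (fun s : ℝ => s ^ (-(1/2) : ℝ) * (K - s) ^ (-b))
      (fun s : ℝ => ((fun t : ℝ => t ^ ((1/2:ℝ) - 1) * (1 - t) ^ ((1-b) - 1)) (s / K))
        * K ^ (-(1/2:ℝ) - b)) (Set.uIcc 0 K) := by
    intro s hs
    rw [Set.uIcc_of_le hK0.le] at hs
    have hs0 : 0 ≤ s := hs.1
    have hsK : s ≤ K := hs.2
    have e1 : (1/2:ℝ) - 1 = -(1/2) := by norm_num
    have e2 : (1-b) - 1 = -b := by ring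
    have e3 : 1 - s / K = (K - s) / K := by field_simp
    simp only [e1, e2, e3]
    rw [Real.div_rpow hs0 hK0.le, Real.div_rpow (by linarith : (0:ℝ) ≤ K - s) hK0.le]
    rw [show (-(1/2:ℝ) - b) = (-(1/2:ℝ)) + (-b) by ring, Real.rpow_add hK0]
    have h1 : K ^ (-(1/2:ℝ)) ≠ 0 := by positivity
    have h2 : K ^ (-b) ≠ 0 := by positivity
    field_simp
  rw [intervalIntegral.integral_congr hcongr, intervalIntegral.integral_mul_const]
  have hcd := intervalIntegral.integral_comp_div (a := 0) (b := K) (c := K)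
    (fun t : ℝ => t ^ ((1/2:ℝ) - 1) * (1 - t) ^ ((1-b) - 1)) (ne_of_gt hK0)
  rw [hcd]
  rw [zero_div, div_self (ne_of_gt hK0)]
  rw [smul_eq_mul]
  rw [show ((1:ℝ)/2 - b) = 1 + (-(1/2:ℝ) - b) by ring, Real.rpow_add hK0, Real.rpow_one]
  unfold realBeta
  ring

theorem stmt_0 (b : ℝ) (hb0 : 0 ≤ b) (hb1 : b < 1) (k : ℕ) (hk : 2 ≤ k) :
    ∑ j ∈ Finset.Icc 1 k,
        ((1 / 2) / (1 / 2 + (k : ℝ) - (j : ℝ))) ^ ((1 : ℝ) / 2) * (j : ℝ) ^ (-b)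
      ≤ realBeta (1 / 2) (1 - b) * ((k : ℝ) + 1) ^ ((1 : ℝ) / 2 - b) := by
  have hkR : (2:ℝ) ≤ (k:ℝ) := by exact_mod_cast hk
  set K : ℝ := (k:ℝ) + 1 with hKdef
  have hK2 : (2:ℝ) ≤ K := by linarith
  have hK0 : (0:ℝ) < K := by linarith
  set g : ℝ → ℝ := fun s => s ^ (-(1/2) : ℝ) * (K - s) ^ (-b) with hg
  set a : ℕ → ℝ := fun n => if n = 0 then 0 else (n:ℝ) + 1 with ha
  -- rewrite sum over Icc as sum over range
  rw [← Finset.Ico_add_one_right_eq_Icc, Finset.sum_Ico_eq_sum_range]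
  have hrange : k + 1 - 1 = k := by omega
  rw [hrange]
  -- per-term bound
  have hterm : ∀ i ∈ Finset.range k,
      ((1 / 2) / (1 / 2 + (k : ℝ) - ((1+i : ℕ) : ℝ))) ^ ((1 : ℝ) / 2) * ((1+i : ℕ) : ℝ) ^ (-b)
        ≤ ∫ s in a (k-1-i)..a (k-1-i+1), g s := by
    intro i hi
    have hik : i < k := Finset.mem_range.mp hi
    by_cases hlast : i = k - 1
    · -- j = k : interval [0, 2]
      subst hlast
      have hm0 : k - 1 - (k-1) = 0 := by omega
      rw [hm0]
      have ha0 : a 0 = 0 := by simp [ha]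
      have ha1 : a 1 = 2 := by norm_num [ha]
      rw [ha0, ha1]
      have hcast : ((1 + (k-1) : ℕ) : ℝ) = (k:ℝ) := by
        have : 1 + (k-1) = k := by omega
        rw [this]
      rw [hcast]
      have hbase : (1 / 2) / (1 / 2 + (k : ℝ) - (k : ℝ)) = 1 := by ring_nf
      rw [hbase, Real.one_rpow, one_mul]
      have hstep := my_step b K (K ^ (-b)) 0 2 hb0 hb1 hK2 le_rfl (by norm_num) (by linarith)
        (Real.rpow_nonneg hK0.le _) ?_
      · have h02 : (0:ℝ) ^ ((1:ℝ)/2) = 0 := Real.zero_rpow (by norm_num)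
        rw [h02, sub_zero] at hstep
        refine le_trans ?_ hstep
        -- k^(-b) ≤ 2 * 2^(1/2) * K^(-b)
        have hsqrt2 : (1:ℝ) ≤ (2:ℝ) ^ ((1:ℝ)/2) := by
          rw [show ((1:ℝ)/2) = (1/(2:ℝ)) by norm_num, ← Real.sqrt_eq_rpow]
          rw [show (1:ℝ) = Real.sqrt 1 by simp]
          exact Real.sqrt_le_sqrt (by norm_num)
        have hkey : (k:ℝ) ^ (-b) ≤ (3/2) * K ^ (-b) := by
          have hk0' : (0:ℝ) < (k:ℝ) := by linarith
          have h1 : (K / (k:ℝ)) ^ b ≤ 3/2 := by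
            have hx1 : (1:ℝ) ≤ K / (k:ℝ) := by
              rw [le_div_iff₀ hk0']; linarith
            calc (K / (k:ℝ)) ^ b ≤ (K / (k:ℝ)) ^ (1:ℝ) :=
                  Real.rpow_le_rpow_of_exponent_le hx1 hb1.le
              _ = K / (k:ℝ) := Real.rpow_one _
              _ ≤ 3/2 := by rw [div_le_iff₀ hk0']; linarith
          have heq : (k:ℝ) ^ (-b) = (K / (k:ℝ)) ^ b * K ^ (-b) := by
            rw [Real.div_rpow hK0.le hk0'.le, Real.rpow_neg hK0.le, Real.rpow_neg hk0'.le]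
            field_simp
          rw [heq]
          exact mul_le_mul_of_nonneg_right h1 (Real.rpow_nonneg hK0.le _)
        have hKb : (0:ℝ) ≤ K ^ (-b) := Real.rpow_nonneg hK0.le _
        nlinarith [mul_le_mul_of_nonneg_right hsqrt2 hKb]
      · intro s hs
        have hs2 : s < 2 := hs.2
        have hs0 : 0 ≤ s := hs.1
        refine Real.rpow_le_rpow_of_nonpos (by linarith) (by linarith) (by linarith)
    · -- j = 1+i ≤ k-1 : interval [M+1, M+2] with M = k-1-i ≥ 1
      have hm1 : 1 ≤ k - 1 - i := by omega
      set m : ℕ := k - 1 - i with hm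
      have hmne : m ≠ 0 := by omega
      have hm1ne : m + 1 ≠ 0 := by omega
      have ham : a m = (m:ℝ) + 1 := by simp [ha, hmne]
      have ham1 : a (m+1) = (m:ℝ) + 2 := by
        simp [ha, hm1ne]; push_cast; ring
      rw [ham, ham1]
      set M : ℝ := (m:ℝ) with hM
      have hM1 : (1:ℝ) ≤ M := by rw [hM]; exact_mod_cast hm1
      have hMk : M + 2 ≤ K := by
        have h' : m + 1 ≤ k := by omega
        have h'' : (m:ℝ) + 1 ≤ (k:ℝ) := by exact_mod_cast h'
        rw [hM, hKdef]; linarith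
      have hcast : (k:ℝ) - ((1+i:ℕ):ℝ) = M := by
        rw [hM]
        have hki : m + (1+i) = k := by omega
        have h' : (m:ℝ) + (1+(i:ℝ)) = (k:ℝ) := by exact_mod_cast hki
        push_cast
        linarith
      rw [show (1/2 + (k:ℝ) - ((1+i:ℕ):ℝ)) = 1/2 + ((k:ℝ) - ((1+i:ℕ):ℝ)) by ring, hcast]
      have hj0 : (0:ℝ) ≤ ((1+i:ℕ):ℝ) := Nat.cast_nonneg _
      have hjb : (0:ℝ) ≤ ((1+i:ℕ):ℝ) ^ (-b) := Real.rpow_nonneg hj0 _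
      have h1 := my_sqrt_ineq M hM1
      have hstep := my_step b K (((1+i:ℕ):ℝ) ^ (-b)) (M+1) (M+2) hb0 hb1 hK2
        (by linarith) (by linarith) hMk hjb ?_
      · calc ((1/2) / (1/2 + M)) ^ ((1:ℝ)/2) * ((1+i:ℕ):ℝ) ^ (-b)
            ≤ 2 * ((M+2) ^ ((1:ℝ)/2) - (M+1) ^ ((1:ℝ)/2)) * ((1+i:ℕ):ℝ) ^ (-b) :=
              mul_le_mul_of_nonneg_right h1 hjb
          _ ≤ _ := hstep
      · intro s hs
        have hsl : M + 1 ≤ s := hs.1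
        have hsr : s < M + 2 := hs.2
        have hKs : 0 < K - s := by linarith
        have hKsle : K - s ≤ ((1+i:ℕ):ℝ) := by
          have hki : m + (1+i) = k := by omega
          have h' : (m:ℝ) + (1+(i:ℝ)) = (k:ℝ) := by exact_mod_cast hki
          have hsl' : (m:ℝ) + 1 ≤ s := by rw [hM] at hsl; linarith
          rw [hKdef]; push_cast; linarith
        exact Real.rpow_le_rpow_of_nonpos hKs hKsle (by linarith)
  -- sum the per-term bounds and telescope
  have hintsub : ∀ i, i < k → IntervalIntegrable g volume (a i) (a (i+1)) := by
    intro i hik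
    apply (my_int b K hb1 hK2).mono_set
    have hbnd : ∀ n, n ≤ k → a n ∈ Set.uIcc (0:ℝ) K := by
      intro n hn
      rw [Set.uIcc_of_le hK0.le]
      by_cases h : n = 0
      · simp [ha, h, hK0.le]
      · have : (n:ℝ) ≤ (k:ℝ) := by exact_mod_cast hn
        simp only [ha, if_neg h]
        constructor <;> [positivity; simp only [hKdef]]
        linarith
    exact Set.uIcc_subset_uIcc (hbnd i (by omega)) (hbnd (i+1) (by omega))
  calc ∑ i ∈ Finset.range k,
        ((1 / 2) / (1 / 2 + (k : ℝ) - ((1+i : ℕ) : ℝ))) ^ ((1 : ℝ) / 2) * ((1+i : ℕ) : ℝ) ^ (-b)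
      ≤ ∑ i ∈ Finset.range k, ∫ s in a (k-1-i)..a (k-1-i+1), g s := Finset.sum_le_sum hterm
    _ = ∑ i ∈ Finset.range k, ∫ s in a i..a (i+1), g s :=
        Finset.sum_range_reflect (fun i => ∫ s in a i..a (i+1), g s) k
    _ = ∫ s in (a 0)..(a k), g s := intervalIntegral.sum_integral_adjacent_intervals hintsub
    _ = ∫ s in (0:ℝ)..K, g s := by
        have h0 : a 0 = 0 := by simp [ha]
        have hak : a k = K := by
          have : k ≠ 0 := by omega
          simp [ha, this, hKdef]
        rw [h0, hak]
    _ = realBeta (1 / 2) (1 - b) * K ^ ((1 : ℝ) / 2 - b) := (my_beta_scale b K hb0 hb1 hK2).symm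
end

section
/- For real numbers b ∈ [0,1), d ∈ (0,∞) and integer k ≥ 2, the sum ∑_{j=1}^{k} (1/(1+k-j)) · j^{-(b+d)} is at most 2^b [(1-b)^{-1} + 2^{d+1}(ed)^{-1}] · (k+1)^{-b}. -/
open Finset Real

lemma aux_sum_rpow (b : ℝ) (hb0 : 0 ≤ b) (hb1 : b < 1) :
    ∀ n : ℕ, ∑ j ∈ Finset.Icc 1 n, (j : ℝ) ^ (-b) ≤ (n : ℝ) ^ (1 - b) / (1 - b) := by
  have hp0 : (0:ℝ) < 1 - b := by linarith
  intro n
  induction n with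
  | zero => simp [Real.zero_rpow hp0.ne']
  | succ n ih =>
    rw [Finset.sum_Icc_succ_top (Nat.one_le_iff_ne_zero.mpr (Nat.succ_ne_zero n))]
    have key : (n : ℝ) ^ (1 - b) + (1 - b) * ((n:ℝ) + 1) ^ (-b) ≤ ((n:ℝ) + 1) ^ (1 - b) := by
      set N : ℝ := (n : ℝ) with hN
      have hN0 : 0 ≤ N := Nat.cast_nonneg n
      have hN1 : (0:ℝ) < N + 1 := by linarith
      have hs : (-1 : ℝ) ≤ -(1 / (N + 1)) := by
        rw [neg_le_neg_iff]
        exact div_le_one_of_le₀ (by linarith) hN1.le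
      have h := rpow_one_add_le_one_add_mul_self hs hp0.le (by linarith : 1 - b ≤ 1)
      have h1 : (1 : ℝ) + -(1 / (N + 1)) = N / (N + 1) := by field_simp; ring
      rw [h1] at h
      have h2 := mul_le_mul_of_nonneg_right h (Real.rpow_nonneg hN1.le (1 - b))
      rw [← Real.mul_rpow (by positivity) hN1.le, div_mul_cancel₀ _ hN1.ne'] at h2
      calc N ^ (1-b) + (1-b) * (N+1)^(-b)
          ≤ (1 + (1-b) * -(1/(N+1))) * (N+1)^(1-b) + (1-b) * (N+1)^(-b) := by
            nlinarith [Real.rpow_nonneg hN1.le (1-b)]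
        _ = (N+1)^(1-b) := by
            have : (N+1)^(-b) = (N+1)^(1-b) / (N+1) := by
              rw [← Real.rpow_sub_one hN1.ne']; ring_nf
            rw [this]; field_simp; ring
    push_cast
    have : ((n:ℝ) + 1) ^ (-b) ≤ (((n:ℝ)+1) ^ (1 - b) - (n:ℝ) ^ (1-b)) / (1 - b) := by
      rw [le_div_iff₀ hp0]; nlinarith
    have h3 := add_le_add ih this
    rw [← add_div] at h3
    have h4 : (n:ℝ) ^ (1-b) + (((n:ℝ)+1) ^ (1 - b) - (n:ℝ) ^ (1-b)) = ((n:ℝ)+1) ^ (1-b) := by ring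
    rw [h4] at h3
    exact h3

lemma aux_harm (n : ℕ) : ∑ i ∈ Finset.Icc 1 n, ((i:ℝ))⁻¹ ≤ 1 + Real.log n := by
  have h := harmonic_le_one_add_log n
  have he : ((harmonic n : ℚ) : ℝ) = ∑ i ∈ Finset.Icc 1 n, ((i:ℝ))⁻¹ := by
    rw [harmonic_eq_sum_Icc]; push_cast; ring
  linarith [he ▸ h]

theorem stmt_1 (b d : ℝ) (hb0 : 0 ≤ b) (hb1 : b < 1) (hd : 0 < d)
    (k : ℕ) (hk : 2 ≤ k) :
    ∑ j ∈ Finset.Icc 1 k, (1 / (1 + (k : ℝ) - (j : ℝ))) * (j : ℝ) ^ (-(b + d))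
      ≤ (2 : ℝ) ^ b * ((1 - b)⁻¹ + 2 ^ (d + 1) * (Real.exp 1 * d)⁻¹) *
        ((k : ℝ) + 1) ^ (-b) := by
  have hp0 : (0:ℝ) < 1 - b := by linarith
  set K : ℝ := (k : ℝ) with hKdef
  have hK2 : (2:ℝ) ≤ K := by rw [hKdef]; exact_mod_cast hk
  have hK1 : (0:ℝ) < K + 1 := by linarith
  have hhalf : (0:ℝ) < (K+1)/2 := by linarith
  set m : ℕ := (k+1)/2 with hm
  have hm1 : 1 ≤ m := by omega
  have hmk : m ≤ k := by omega
  have h2m : 2*m ≤ k+1 := by omega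
  have h2m' : k+1 ≤ 2*m+1 := by omega
  have hmle : (m:ℝ) ≤ (K+1)/2 := by
    rw [hKdef]
    have : ((2*m : ℕ):ℝ) ≤ ((k+1 : ℕ):ℝ) := by exact_mod_cast h2m
    push_cast at this ⊢; linarith
  have hmreal : (m:ℝ) ≤ K := by rw [hKdef]; exact_mod_cast hmk
  have hden : (K+1)/2 ≤ 1 + K - (m:ℝ) := by linarith
  have hKbne : ((K+1):ℝ) ^ b ≠ 0 := (Real.rpow_pos_of_pos hK1 b).ne'
  -- split the sum
  have hsplit : ∑ j ∈ Finset.Icc 1 k, (1 / (1 + K - (j:ℝ))) * (j:ℝ) ^ (-(b+d))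
      = (∑ j ∈ Finset.Ioc 0 m, (1 / (1 + K - (j:ℝ))) * (j:ℝ) ^ (-(b+d)))
        + ∑ j ∈ Finset.Ioc m k, (1 / (1 + K - (j:ℝ))) * (j:ℝ) ^ (-(b+d)) := by
    rw [Finset.sum_Ioc_consecutive _ (Nat.zero_le m) hmk]
    congr 1
  rw [hsplit]
  -- Part 1
  have part1 : ∑ j ∈ Finset.Ioc 0 m, (1 / (1 + K - (j:ℝ))) * (j:ℝ) ^ (-(b+d))
      ≤ (2:ℝ) ^ b * (1-b)⁻¹ * (K+1) ^ (-b) := by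
    have step1 : ∑ j ∈ Finset.Ioc 0 m, (1 / (1 + K - (j:ℝ))) * (j:ℝ) ^ (-(b+d))
        ≤ ∑ j ∈ Finset.Ioc 0 m, (1 / (1 + K - (m:ℝ))) * (j:ℝ) ^ (-b) := by
      apply Finset.sum_le_sum
      intro j hj
      rw [Finset.mem_Ioc] at hj
      have hj1 : (1:ℝ) ≤ (j:ℝ) := by exact_mod_cast hj.1
      have hjm : (j:ℝ) ≤ (m:ℝ) := by exact_mod_cast hj.2
      have hd1 : (0:ℝ) < 1 + K - (m:ℝ) := by linarith
      apply mul_le_mul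
      · apply one_div_le_one_div_of_le hd1 (by linarith)
      · exact Real.rpow_le_rpow_of_exponent_le hj1 (by linarith)
      · positivity
      · positivity
    have step2 : ∑ j ∈ Finset.Ioc 0 m, (1 / (1 + K - (m:ℝ))) * (j:ℝ) ^ (-b)
        ≤ (1 / (1 + K - (m:ℝ))) * ((m:ℝ) ^ (1-b) / (1-b)) := by
      rw [← Finset.mul_sum]
      have hd1 : (0:ℝ) < 1 + K - (m:ℝ) := by linarith
      apply mul_le_mul_of_nonneg_left _ (by positivity)
      have h5 : Finset.Ioc 0 m = Finset.Icc 1 m := rfl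
      rw [h5]
      exact aux_sum_rpow b hb0 hb1 m
    have step3 : (1 / (1 + K - (m:ℝ))) * ((m:ℝ) ^ (1-b) / (1-b))
        ≤ (2/(K+1)) * (((K+1)/2) ^ (1-b) / (1-b)) := by
      have hd1 : (0:ℝ) < 1 + K - (m:ℝ) := by linarith
      apply mul_le_mul
      · rw [div_le_div_iff₀ hd1 hK1]; linarith
      · gcongr
        all_goals first
          | exact Real.rpow_le_rpow (Nat.cast_nonneg m) hmle hp0.le
          | positivity
      · positivity
      · positivity
    have e1 : (((K+1)/2 : ℝ)) ^ (-b) = 2^b * (K+1)^(-b) := by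
      rw [Real.rpow_neg hhalf.le, Real.div_rpow hK1.le (by norm_num : (0:ℝ) ≤ 2),
        Real.rpow_neg hK1.le, inv_div, div_eq_mul_inv]
    have eq4 : (2/(K+1)) * (((K+1)/2) ^ (1-b) / (1-b)) = (2:ℝ)^b * (1-b)⁻¹ * (K+1)^(-b) := by
      rw [show (1-b : ℝ) = 1 + (-b) by ring, Real.rpow_add hhalf, Real.rpow_one, e1]
      have h8 : (2/(K+1)) * ((K+1)/2) = 1 := by field_simp
      calc (2/(K+1)) * (((K+1)/2) * (2^b * (K+1)^(-b)) / (1-b))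
          = ((2/(K+1)) * ((K+1)/2)) * (2^b * (K+1)^(-b) * (1-b)⁻¹) := by
            rw [div_eq_mul_inv _ (1-b)]; ring
        _ = 2^b * (1-b)⁻¹ * (K+1)^(-b) := by rw [h8]; ring
    calc _ ≤ _ := step1
      _ ≤ _ := step2
      _ ≤ _ := step3
      _ = _ := eq4
  -- Part 2
  have part2 : ∑ j ∈ Finset.Ioc m k, (1 / (1 + K - (j:ℝ))) * (j:ℝ) ^ (-(b+d))
      ≤ (2:ℝ) ^ b * (2 ^ (d+1) * (Real.exp 1 * d)⁻¹) * (K+1) ^ (-b) := by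
    have step1 : ∑ j ∈ Finset.Ioc m k, (1 / (1 + K - (j:ℝ))) * (j:ℝ) ^ (-(b+d))
        ≤ ((K+1)/2) ^ (-(b+d)) * ∑ j ∈ Finset.Ioc m k, (1 / (1 + K - (j:ℝ))) := by
      rw [Finset.mul_sum]
      apply Finset.sum_le_sum
      intro j hj
      rw [Finset.mem_Ioc] at hj
      have hjlow : (K+1)/2 ≤ (j:ℝ) := by
        have h6 : ((k+1:ℕ):ℝ) ≤ ((2*m+1 : ℕ):ℝ) := by exact_mod_cast h2m'
        have hmj : (m:ℝ) + 1 ≤ (j:ℝ) := by exact_mod_cast hj.1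
        push_cast at h6; rw [hKdef]; push_cast; linarith
      have hjk : (j:ℝ) ≤ K := by rw [hKdef]; exact_mod_cast hj.2
      have hd1 : (0:ℝ) < 1 + K - (j:ℝ) := by linarith
      rw [mul_comm (((K+1)/2) ^ (-(b+d)))]
      apply mul_le_mul le_rfl
        (Real.rpow_le_rpow_of_nonpos hhalf hjlow (by linarith)) (by positivity) (by positivity)
    have hreindex : ∑ j ∈ Finset.Ioc m k, (1 / (1 + K - (j:ℝ)))
        = ∑ i ∈ Finset.Icc 1 (k-m), ((i:ℝ))⁻¹ := by
      apply Finset.sum_nbij' (i := fun j => k + 1 - j) (j := fun i => k + 1 - i)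
      · intro a ha; rw [Finset.mem_Ioc] at ha; rw [Finset.mem_Icc]; omega
      · intro a ha; rw [Finset.mem_Icc] at ha; rw [Finset.mem_Ioc]; omega
      · intro a ha; rw [Finset.mem_Ioc] at ha; omega
      · intro a ha; rw [Finset.mem_Icc] at ha; omega
      · intro a ha
        rw [Finset.mem_Ioc] at ha
        rw [one_div]
        congr 1
        rw [hKdef, Nat.cast_sub (by omega)]
        push_cast
        ring
    have hkm1 : 1 ≤ k - m := by omega
    have hharm : ∑ i ∈ Finset.Icc 1 (k-m), ((i:ℝ))⁻¹ ≤ 2 * Real.log (K+1) := by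
      have h1 := aux_harm (k-m)
      have hpos : (0:ℝ) < ((k-m : ℕ):ℝ) := by exact_mod_cast hkm1
      have hle : ((k-m:ℕ):ℝ) ≤ K + 1 := by
        rw [hKdef]
        have : ((k-m:ℕ):ℝ) ≤ ((k:ℕ):ℝ) := by exact_mod_cast Nat.sub_le k m
        linarith
      have hlog1 : Real.log ((k-m : ℕ):ℝ) ≤ Real.log (K+1) := Real.log_le_log hpos hle
      have hone : (1:ℝ) ≤ Real.log (K+1) := by
        rw [Real.le_log_iff_exp_le (by linarith)]
        calc Real.exp 1 ≤ 2.7182818286 := Real.exp_one_lt_d9.le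
          _ ≤ K + 1 := by linarith
      linarith
    have hlogK : Real.log (K+1) ≤ (K+1)^d / (Real.exp 1 * d) := by
      have hx : (0:ℝ) < (K+1)^d := Real.rpow_pos_of_pos hK1 d
      have h1 : Real.log ((K+1)^d / Real.exp 1) ≤ (K+1)^d / Real.exp 1 - 1 :=
        Real.log_le_sub_one_of_pos (by positivity)
      rw [Real.log_div hx.ne' (Real.exp_ne_zero 1), Real.log_exp, Real.log_rpow hK1] at h1
      have h2 : d * Real.log (K+1) ≤ (K+1)^d / Real.exp 1 := by linarith
      calc Real.log (K+1) = (d * Real.log (K+1)) / d := by field_simp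
        _ ≤ ((K+1)^d / Real.exp 1) / d := by gcongr
        _ = (K+1)^d / (Real.exp 1 * d) := by ring
    have key2 : (K+1)^(-d) * Real.log (K+1) ≤ (Real.exp 1 * d)⁻¹ := by
      have h7 := mul_le_mul_of_nonneg_left hlogK (Real.rpow_nonneg hK1.le (-d))
      calc (K+1)^(-d) * Real.log (K+1) ≤ (K+1)^(-d) * ((K+1)^d / (Real.exp 1 * d)) := h7
        _ = (Real.exp 1 * d)⁻¹ := by
          rw [div_eq_mul_inv, ← mul_assoc, ← Real.rpow_add hK1, neg_add_cancel,
            Real.rpow_zero, one_mul]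
    have e2 : (((K+1)/2 : ℝ)) ^ (-(b+d)) = 2^(b+d) * (K+1)^(-(b+d)) := by
      rw [Real.rpow_neg hhalf.le, Real.div_rpow hK1.le (by norm_num : (0:ℝ) ≤ 2),
        Real.rpow_neg hK1.le, inv_div, div_eq_mul_inv]
    have hlogpos : (0:ℝ) ≤ Real.log (K+1) := Real.log_nonneg (by linarith)
    calc ∑ j ∈ Finset.Ioc m k, (1 / (1 + K - (j:ℝ))) * (j:ℝ) ^ (-(b+d))
        ≤ ((K+1)/2) ^ (-(b+d)) * ∑ j ∈ Finset.Ioc m k, (1 / (1 + K - (j:ℝ))) := step1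
      _ ≤ ((K+1)/2) ^ (-(b+d)) * (2 * Real.log (K+1)) := by
          apply mul_le_mul_of_nonneg_left _ (Real.rpow_nonneg hhalf.le _)
          rw [hreindex]; exact hharm
      _ = ((2:ℝ)^b * (2^d * 2) * (K+1)^(-b)) * ((K+1)^(-d) * Real.log (K+1)) := by
          rw [e2, show (-(b+d) : ℝ) = (-b) + (-d) by ring, Real.rpow_add hK1,
            Real.rpow_add (by norm_num : (0:ℝ) < 2)]
          ring
      _ ≤ ((2:ℝ)^b * (2^d * 2) * (K+1)^(-b)) * (Real.exp 1 * d)⁻¹ := by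
          apply mul_le_mul_of_nonneg_left key2 (by positivity)
      _ = (2:ℝ) ^ b * (2 ^ (d+1) * (Real.exp 1 * d)⁻¹) * (K+1) ^ (-b) := by
          rw [Real.rpow_add (by norm_num : (0:ℝ) < 2) d 1, Real.rpow_one]
          ring
  have hfinal : (2:ℝ) ^ b * ((1 - b)⁻¹ + 2 ^ (d + 1) * (Real.exp 1 * d)⁻¹) * (K + 1) ^ (-b)
      = (2:ℝ)^b * (1-b)⁻¹ * (K+1)^(-b) + (2:ℝ)^b * (2^(d+1) * (Real.exp 1 * d)⁻¹) * (K+1)^(-b) := by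
    ring
  rw [hfinal]
  exact add_le_add part1 part2
end

section
/- Suppose A is Fréchet differentiable, S is a bounded linear operator into L², and there exists a family of bounded operators R_f with S A'(f) = R_f S A'(f†) and ‖R_f - I‖ ≤ C_R ‖f - f†‖ for all f in a ball B_d(f†). Then the Taylor remainder r(f) := A(f) - A(f†) - A'(f†)(f - f†) satisfies ‖S r(f)‖_{L²} ≤ (C_R/2) · ‖f - f†‖_{H₁} · ‖S A'(f†)(f - f†)‖_{L²} for all f ∈ B_d(f†). -/
theorem stmt_9 {H₁ H₂ L2 : Type*}
    [NormedAddCommGroup H₁] [InnerProductSpace ℝ H₁] [CompleteSpace H₁]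
    [NormedAddCommGroup H₂] [InnerProductSpace ℝ H₂] [CompleteSpace H₂]
    [NormedAddCommGroup L2] [InnerProductSpace ℝ L2] [CompleteSpace L2]
    (A : H₁ → H₂) (A' : H₁ → (H₁ →L[ℝ] H₂)) (fdag : H₁) (d : ℝ) (hd : 0 < d)
    (hdiff : ∀ f ∈ Metric.closedBall fdag d, HasFDerivAt A (A' f) f)
    (S : H₂ →L[ℝ] L2) (R : H₁ → (L2 →L[ℝ] L2)) (CR : ℝ) (hCR : 0 < CR)
    (hrange : ∀ f ∈ Metric.closedBall fdag d,
      S.comp (A' f) = (R f).comp (S.comp (A' fdag)))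
    (hR : ∀ f ∈ Metric.closedBall fdag d,
      ‖R f - ContinuousLinearMap.id ℝ L2‖ ≤ CR * ‖f - fdag‖) :
    ∀ f ∈ Metric.closedBall fdag d,
      ‖S (A f - A fdag - A' fdag (f - fdag))‖
        ≤ (CR / 2) * ‖f - fdag‖ * ‖S (A' fdag (f - fdag))‖ := by
  intro f hf
  set u : H₁ := f - fdag with hu
  set v : L2 := S (A' fdag u) with hv
  have hfball : ‖u‖ ≤ d := by
    simpa [hu, dist_eq_norm] using (Metric.mem_closedBall.mp hf)
  -- path points stay in the ball
  have hpath : ∀ t ∈ Set.Icc (0:ℝ) 1, fdag + t • u ∈ Metric.closedBall fdag d := by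
    intro t ht
    rw [Metric.mem_closedBall, dist_eq_norm]
    have : ‖fdag + t • u - fdag‖ = |t| * ‖u‖ := by
      simp [norm_smul, Real.norm_eq_abs]
    rw [this, abs_of_nonneg ht.1]
    calc t * ‖u‖ ≤ 1 * ‖u‖ := by
          exact mul_le_mul_of_nonneg_right ht.2 (norm_nonneg _)
      _ ≤ d := by simpa using hfball
  set g : ℝ → L2 := fun t => S (A (fdag + t • u)) - S (A fdag) - t • v with hg
  set g' : ℝ → L2 := fun t => (R (fdag + t • u) - ContinuousLinearMap.id ℝ L2) v with hg'
  have hderiv : ∀ t ∈ Set.Icc (0:ℝ) 1, HasDerivAt g (g' t) t := by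
    intro t ht
    have hmem := hpath t ht
    have h1 : HasDerivAt (fun s : ℝ => fdag + s • u) u t := by
      simpa using ((hasDerivAt_id t).smul_const u).const_add fdag
    have h2 : HasDerivAt (fun s : ℝ => A (fdag + s • u)) (A' (fdag + t • u) u) t :=
      (hdiff _ hmem).comp_hasDerivAt t h1
    have h3 : HasDerivAt (fun s : ℝ => S (A (fdag + s • u)))
        (S (A' (fdag + t • u) u)) t := (S.hasFDerivAt.comp_hasDerivAt t h2)
    have h4 : HasDerivAt g (S (A' (fdag + t • u) u) - v) t := by
      simpa [hg, Pi.sub_def] using (h3.sub_const (S (A fdag))).sub ((hasDerivAt_id t).smul_const v)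
    have key : S (A' (fdag + t • u) u) = R (fdag + t • u) v := by
      have := hrange _ hmem
      calc S (A' (fdag + t • u) u) = (S.comp (A' (fdag + t • u))) u := rfl
        _ = ((R (fdag + t • u)).comp (S.comp (A' fdag))) u := by rw [this]
        _ = R (fdag + t • u) v := rfl
    have : S (A' (fdag + t • u) u) - v = g' t := by
      rw [key]; simp [hg']
    rwa [this] at h4
  set C : ℝ := CR * ‖u‖ * ‖v‖ with hC
  have hCnn : 0 ≤ C := by positivity
  set B : ℝ → ℝ := fun t => C * t ^ 2 / 2 with hB
  have hBderiv : ∀ t : ℝ, HasDerivAt B (C * t) t := by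
    intro t
    have h : HasDerivAt B (C * ((2:ℕ) * t ^ 1) / 2) t :=
      ((hasDerivAt_pow 2 t).const_mul C).div_const 2
    convert h using 1
    push_cast
    ring
  have hbound : ∀ t ∈ Set.Ico (0:ℝ) 1, ‖g' t‖ ≤ C * t := by
    intro t ht
    have hmem := hpath t ⟨ht.1, ht.2.le⟩
    calc ‖g' t‖ ≤ ‖R (fdag + t • u) - ContinuousLinearMap.id ℝ L2‖ * ‖v‖ :=
          (R (fdag + t • u) - ContinuousLinearMap.id ℝ L2).le_opNorm v
      _ ≤ (CR * ‖fdag + t • u - fdag‖) * ‖v‖ := by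
          exact mul_le_mul_of_nonneg_right (hR _ hmem) (norm_nonneg _)
      _ = C * t := by
          have : ‖fdag + t • u - fdag‖ = t * ‖u‖ := by
            simp [norm_smul, Real.norm_eq_abs, abs_of_nonneg ht.1]
          rw [this, hC]; ring
  have main := image_norm_le_of_norm_deriv_right_le_deriv_boundary
    (f := g) (f' := g') (a := 0) (b := 1)
    (fun t ht => (hderiv t ht).continuousAt.continuousWithinAt)
    (fun t ht => (hderiv t ⟨ht.1, ht.2.le⟩).hasDerivWithinAt)
    (by simp [hg, hB]) hBderiv hbound
  have h1 := main (Set.right_mem_Icc.mpr zero_le_one)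
  have hgval : g 1 = S (A f - A fdag - A' fdag (f - fdag)) := by
    simp [hg, hu, hv, map_sub]
  rw [hgval] at h1
  calc ‖S (A f - A fdag - A' fdag (f - fdag))‖ ≤ B 1 := h1
    _ = (CR / 2) * ‖f - fdag‖ * ‖S (A' fdag (f - fdag))‖ := by
        simp only [hB, hC, hu, hv]; ring
end

section
/- Let L be a positive self-adjoint trace-class operator on a separable Hilbert space with eigenvalues σ_j satisfying σ_j ≤ c j^{-1/ν} for some c > 0 and 0 < ν < 1. Then the effective dimension N(λ) := Tr((L + λI)^{-1} L) = ∑_j σ_j/(σ_j + λ) satisfies N(λ) ≤ C λ^{-ν} for all λ ∈ (0,1], for some constant C depending only on c and ν. -/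
/-- Tangent-line / Bernoulli type step inequality: for `r > 0` and `1 ≤ n`,
`r * (n+1)^(-(r+1)) ≤ n^(-r) - (n+1)^(-r)`. -/
lemma aux_step_11 (r : ℝ) (hr : 0 < r) (n : ℕ) (hn : 1 ≤ n) :
    r * ((n : ℝ) + 1) ^ (-(r + 1)) ≤ (n : ℝ) ^ (-r) - ((n : ℝ) + 1) ^ (-r) := by
  set a : ℝ := (n : ℝ) with ha_def
  have ha : (0 : ℝ) < a := by
    have : (1 : ℝ) ≤ a := by rw [ha_def]; exact_mod_cast hn
    linarith
  set b : ℝ := a + 1 with hb_def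
  have hb : (0 : ℝ) < b := by positivity
  have hab : a < b := by simp [hb_def]
  -- key: 1 + r / b ≤ (b / a) ^ r
  have hkey : 1 + r / b ≤ (b / a) ^ r := by
    have hba : 0 < b / a := by positivity
    have hlog : 1 - a / b ≤ Real.log (b / a) := by
      have h1 : Real.log (a / b) ≤ a / b - 1 := Real.log_le_sub_one_of_pos (by positivity)
      have h2 : Real.log (a / b) = - Real.log (b / a) := by
        rw [← Real.log_inv]; congr 1; field_simp
      linarith [h2 ▸ h1]
    have h3 : r * (1 - a / b) ≤ r * Real.log (b / a) :=
      mul_le_mul_of_nonneg_left hlog hr.le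
    have h4 : r * (1 - a / b) + 1 ≤ Real.exp (r * Real.log (b / a)) :=
      le_trans (by linarith [Real.add_one_le_exp (r * (1 - a / b))]) (Real.exp_le_exp.2 h3)
    rw [Real.rpow_def_of_pos hba]
    have : 1 - a / b = 1 / b := by field_simp; ring
    rw [this] at h4
    calc 1 + r / b = r * (1 / b) + 1 := by ring
    _ ≤ Real.exp (Real.log (b / a) * r) := by rw [mul_comm (Real.log (b / a)) r]; exact h4
  -- multiply both sides by b^(-r) > 0
  have hbr : (0 : ℝ) < b ^ (-r) := Real.rpow_pos_of_pos hb _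
  have h5 : b ^ (-r) * (1 + r / b) ≤ b ^ (-r) * (b / a) ^ r :=
    mul_le_mul_of_nonneg_left hkey hbr.le
  have h6 : b ^ (-r) * (b / a) ^ r = a ^ (-r) := by
    rw [Real.div_rpow hb.le ha.le, Real.rpow_neg hb.le, Real.rpow_neg ha.le]
    field_simp
  have h7 : b ^ (-r) * (1 + r / b) = b ^ (-r) + r * b ^ (-(r + 1)) := by
    have : b ^ (-(r + 1)) = b ^ (-r) / b := by
      rw [← Real.rpow_sub_one hb.ne']
      ring_nf
    rw [this]; field_simp
  rw [h7, h6] at h5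
  linarith

/-- Telescoping tail bound: `∑_{j} ((N+j)+1)^(-(r+1)) ≤ N^(-r)/r` for `N ≥ 1`. -/
lemma aux_tail_11 (r : ℝ) (hr : 0 < r) (N : ℕ) (hN : 1 ≤ N) :
    ∑' j : ℕ, (((N + j : ℕ) : ℝ) + 1) ^ (-(r + 1)) ≤ ((N : ℝ)) ^ (-r) / r := by
  apply Real.tsum_le_of_sum_range_le
  · intro n
    positivity
  · intro m
    have key : ∀ j ∈ Finset.range m,
        (((N + j : ℕ) : ℝ) + 1) ^ (-(r + 1)) ≤
          (1 / r) * (((N + j : ℕ) : ℝ) ^ (-r) - ((N + (j + 1) : ℕ) : ℝ) ^ (-r)) := by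
      intro j _
      have h1 : 1 ≤ N + j := le_trans hN (Nat.le_add_right _ _)
      have := aux_step_11 r hr (N + j) h1
      have hcast : ((N + (j + 1) : ℕ) : ℝ) = ((N + j : ℕ) : ℝ) + 1 := by push_cast; ring
      rw [hcast]
      rw [div_mul_eq_mul_div, le_div_iff₀ hr, one_mul] at *
      calc (((N + j : ℕ) : ℝ) + 1) ^ (-(r + 1)) * r
          = r * (((N + j : ℕ) : ℝ) + 1) ^ (-(r + 1)) := by ring
        _ ≤ ((N + j : ℕ) : ℝ) ^ (-r) - (((N + j : ℕ) : ℝ) + 1) ^ (-r) := this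
    calc ∑ j ∈ Finset.range m, (((N + j : ℕ) : ℝ) + 1) ^ (-(r + 1))
        ≤ ∑ j ∈ Finset.range m,
            (1 / r) * (((N + j : ℕ) : ℝ) ^ (-r) - ((N + (j + 1) : ℕ) : ℝ) ^ (-r)) :=
          Finset.sum_le_sum key
      _ = (1 / r) * (((N + 0 : ℕ) : ℝ) ^ (-r) - ((N + m : ℕ) : ℝ) ^ (-r)) := by
          rw [← Finset.mul_sum]
          congr 1
          exact Finset.sum_range_sub' (fun j => ((N + j : ℕ) : ℝ) ^ (-r)) m
      _ ≤ ((N : ℝ)) ^ (-r) / r := by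
          have h2 : (0 : ℝ) ≤ ((N + m : ℕ) : ℝ) ^ (-r) := by positivity
          rw [one_div, inv_mul_eq_div, div_le_div_iff₀ hr hr]
          have : ((N + 0 : ℕ) : ℝ) = (N : ℝ) := by norm_num
          rw [this]
          nlinarith

theorem stmt_11 (c ν : ℝ) (hc : 0 < c) (hν0 : 0 < ν) (hν1 : ν < 1) :
    ∃ C > 0, ∀ σ : ℕ → ℝ,
      (∀ j, 0 ≤ σ j) →
      (Antitone σ) →
      (∀ j : ℕ, σ j ≤ c * ((j : ℝ) + 1) ^ (-(1 / ν))) →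
      ∀ lam : ℝ, 0 < lam → lam ≤ 1 →
        ∑' j : ℕ, σ j / (σ j + lam) ≤ C * lam ^ (-ν) := by
  set r : ℝ := 1 / ν - 1 with hr_def
  have hr : 0 < r := by
    rw [hr_def]
    have : 1 < 1 / ν := one_lt_one_div hν0 hν1
    linarith
  have hrν : r + 1 = 1 / ν := by rw [hr_def]; ring
  have h1ν : (0 : ℝ) < 1 - ν := by linarith
  refine ⟨2 + c * ν / (1 - ν), by have := div_pos (mul_pos hc hν0) h1ν; linarith, ?_⟩
  intro σ hσ0 hmono hdecay lam hl0 hl1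
  set t : ℕ → ℝ := fun j => σ j / (σ j + lam) with ht_def
  have hden : ∀ j, 0 < σ j + lam := fun j => by have := hσ0 j; linarith
  have ht0 : ∀ j, 0 ≤ t j := fun j => div_nonneg (hσ0 j) (hden j).le
  have ht1 : ∀ j, t j ≤ 1 := fun j => by
    rw [ht_def, div_le_one (hden j)]; linarith
  have htb : ∀ j, t j ≤ (c / lam) * ((j : ℝ) + 1) ^ (-(r + 1)) := by
    intro j
    have h1 : t j ≤ σ j / lam := by
      apply div_le_div_of_nonneg_left (hσ0 j) hl0 <;> linarith [hσ0 j]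
    refine h1.trans ?_
    rw [hrν, div_mul_eq_mul_div, div_le_div_iff₀ hl0 hl0]
    have := hdecay j
    nlinarith [Real.rpow_pos_of_pos (show (0:ℝ) < (j:ℝ)+1 by positivity) (-(1/ν))]
  -- summability
  have hsum_pow : Summable (fun j : ℕ => ((j : ℝ) + 1) ^ (-(r + 1))) := by
    have h := Real.summable_nat_rpow (p := -(r + 1)).2 (by linarith)
    have := (summable_nat_add_iff (f := fun n : ℕ => (n : ℝ) ^ (-(r + 1))) 1).2 h
    simpa [Nat.cast_add] using this
  have hsumt : Summable t := by
    apply Summable.of_nonneg_of_le ht0 htb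
    exact hsum_pow.mul_left _
  -- split at N
  have hlν : (1 : ℝ) ≤ lam ^ (-ν) :=
    Real.one_le_rpow_of_pos_of_le_one_of_nonpos hl0 hl1 (by linarith)
  set N : ℕ := ⌈lam ^ (-ν)⌉₊ with hN_def
  have hN1 : 1 ≤ N := Nat.one_le_ceil_iff.2 (by linarith)
  have hNle : (N : ℝ) ≤ 2 * lam ^ (-ν) := by
    have := Nat.ceil_lt_add_one (show (0:ℝ) ≤ lam ^ (-ν) by positivity)
    have h2 := this.le
    linarith
  have hNge : lam ^ (-ν) ≤ (N : ℝ) := Nat.le_ceil _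
  have hsplit := Summable.sum_add_tsum_nat_add (f := t) N hsumt
  -- head bound
  have hhead : ∑ j ∈ Finset.range N, t j ≤ 2 * lam ^ (-ν) := by
    calc ∑ j ∈ Finset.range N, t j ≤ ∑ j ∈ Finset.range N, (1 : ℝ) :=
          Finset.sum_le_sum (fun j _ => ht1 j)
      _ = (N : ℝ) := by simp
      _ ≤ 2 * lam ^ (-ν) := hNle
  -- tail bound
  have htail : ∑' j : ℕ, t (j + N) ≤ (c * ν / (1 - ν)) * lam ^ (-ν) := by
    have hb1 : ∀ j : ℕ, t (j + N) ≤ (c / lam) * (((N + j : ℕ) : ℝ) + 1) ^ (-(r + 1)) := by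
      intro j
      have := htb (j + N)
      have hc2 : ((j + N : ℕ) : ℝ) = ((N + j : ℕ) : ℝ) := by push_cast; ring
      simpa [hc2] using this
    have hsum2 : Summable (fun j : ℕ => (c / lam) * (((N + j : ℕ) : ℝ) + 1) ^ (-(r + 1))) := by
      have : Summable (fun j : ℕ => ((j + N : ℕ) : ℝ) ^ (-(r + 1)) + 0) := by
        simpa using ((summable_nat_add_iff (f := fun n : ℕ => (n : ℝ) ^ (-(r + 1))) N).2
          (Real.summable_nat_rpow.2 (by linarith)))
      apply Summable.mul_left
      have h := (summable_nat_add_iff (f := fun n : ℕ => ((n : ℝ) + 1) ^ (-(r + 1))) N).2 hsum_pow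
      apply h.congr
      intro j
      congr 2
      push_cast; ring
    calc ∑' j : ℕ, t (j + N)
        ≤ ∑' j : ℕ, (c / lam) * (((N + j : ℕ) : ℝ) + 1) ^ (-(r + 1)) := by
          apply Summable.tsum_le_tsum hb1 _ hsum2
          exact (summable_nat_add_iff N).2 hsumt
      _ = (c / lam) * ∑' j : ℕ, (((N + j : ℕ) : ℝ) + 1) ^ (-(r + 1)) := tsum_mul_left
      _ ≤ (c / lam) * (((N : ℝ)) ^ (-r) / r) := by
          apply mul_le_mul_of_nonneg_left (aux_tail_11 r hr N hN1) (by positivity)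
      _ ≤ (c * ν / (1 - ν)) * lam ^ (-ν) := by
          have hNpos : (0 : ℝ) < N := by exact_mod_cast hN1
          have hlνpos : (0 : ℝ) < lam ^ (-ν) := Real.rpow_pos_of_pos hl0 _
          have h1 : ((N : ℝ)) ^ (-r) ≤ (lam ^ (-ν)) ^ (-r) :=
            Real.rpow_le_rpow_of_nonpos hlνpos hNge (by linarith)
          have h2 : (lam ^ (-ν)) ^ (-r) = lam ^ (ν * r) := by
            rw [← Real.rpow_mul hl0.le]
            ring_nf
          have h3 : lam ^ (ν * r) = lam ^ (-ν) * lam := by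
            have hνr : ν * r = -ν + 1 := by
              rw [hr_def]; field_simp; ring
            rw [hνr, Real.rpow_add hl0, Real.rpow_one]
          have h4 : (c / lam) * (((N : ℝ)) ^ (-r) / r) ≤ (c / lam) * ((lam ^ (-ν)) ^ (-r) / r) := by
            gcongr
          refine h4.trans (le_of_eq ?_)
          have hrval : r = (1 - ν) / ν := by rw [hr_def]; field_simp
          have hνne : ν ≠ 0 := hν0.ne'
          have hlne : lam ≠ 0 := hl0.ne'
          have h1νne : (1 : ℝ) - ν ≠ 0 := h1ν.ne'
          rw [h2, h3, hrval]
          field_simp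
  rw [← hsplit]
  have hC : (2 + c * ν / (1 - ν)) * lam ^ (-ν)
      = 2 * lam ^ (-ν) + (c * ν / (1 - ν)) * lam ^ (-ν) := by ring
  rw [hC]
  exact add_le_add hhead htail
end
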